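/- Let X be a C*-correspondence over A. An ideal I of A is negatively invariant (i.e., J_X ∩ X⁻¹(I) ⊂ I) if and only if J_X ⊂ J(I) where J(I) = {a ∈ A : [φ_X(a)]_I ∈ K(X_I), a·X⁻¹(I) ⊂ I}. -/

import Mathlib

noncomputable section

/-- A (right) Hilbert C*-module over a C*-algebra `A`. -/
class HilbertModule (A : Type*) [CStarAlgebra A] (X : Type*)
    [NormedAddCommGroup X] [NormedSpace ℂ X] : Type _ where
  rsmul : X → A → X
  inner : X → X → A
  rsmul_add_left : ∀ (x y : X) (a : A), rsmul (x + y) a = rsmul x a + rsmul y a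
  rsmul_add_right : ∀ (x : X) (a b : A), rsmul x (a + b) = rsmul x a + rsmul x b
  rsmul_rsmul : ∀ (x : X) (a b : A), rsmul (rsmul x a) b = rsmul x (a * b)
  rsmul_csmul_left : ∀ (c : ℂ) (x : X) (a : A), rsmul (c • x) a = c • rsmul x a
  rsmul_csmul_right : ∀ (c : ℂ) (x : X) (a : A), rsmul x (c • a) = c • rsmul x a
  inner_add_left : ∀ (x y z : X), inner (x + y) z = inner x z + inner y z
  inner_add_right : ∀ (x y z : X), inner x (y + z) = inner x y + inner x z
  inner_csmul_right : ∀ (c : ℂ) (x y : X), inner x (c • y) = c • inner x y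
  star_inner : ∀ (x y : X), star (inner x y) = inner y x
  inner_rsmul_right : ∀ (x y : X) (a : A), inner x (rsmul y a) = inner x y * a
  inner_self_isPositive : ∀ x : X, ∃ b : A, inner x x = star b * b
  norm_sq_inner : ∀ x : X, ‖x‖ ^ 2 = ‖inner x x‖
  norm_inner_le : ∀ x y : X, ‖inner x y‖ ≤ ‖x‖ * ‖y‖
  norm_rsmul_le : ∀ (x : X) (a : A), ‖rsmul x a‖ ≤ ‖x‖ * ‖a‖

namespace HilbertModule

variable {A : Type*} [CStarAlgebra A] {X : Type*}
  [NormedAddCommGroup X] [NormedSpace ℂ X] [HilbertModule A X]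

/-- The closed submodule `X·S` generated by products `ξ·a`, `a ∈ S`. -/
def idealSub (X : Type*) {A : Type*} [CStarAlgebra A] [NormedAddCommGroup X]
    [NormedSpace ℂ X] [HilbertModule A X] (S : Set A) : Set X :=
  closure (Submodule.span ℂ {x : X | ∃ (ξ : X) (a : A), a ∈ S ∧ x = rsmul ξ a} : Set X)

/-- The rank-one ("theta") operator `ζ ↦ ξ⟨η,ζ⟩`. -/
def rankOne (A : Type*) {X : Type*} [CStarAlgebra A] [NormedAddCommGroup X]
    [NormedSpace ℂ X] [HilbertModule A X] (ξ η : X) : X →L[ℂ] X :=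
  LinearMap.mkContinuous
    { toFun := fun ζ => rsmul ξ (inner (A := A) η ζ)
      map_add' := fun x y => by
        show rsmul ξ (inner (A := A) η (x + y)) = _
        rw [inner_add_right, rsmul_add_right]
      map_smul' := fun c x => by
        show rsmul ξ (inner (A := A) η (c • x)) = _
        simp only [RingHom.id_apply]
        rw [inner_csmul_right, rsmul_csmul_right] }
    (‖ξ‖ * ‖η‖)
    (fun ζ => by
      calc ‖rsmul ξ (inner (A := A) η ζ)‖ ≤ ‖ξ‖ * ‖inner (A := A) η ζ‖ :=
            norm_rsmul_le _ _
        _ ≤ ‖ξ‖ * (‖η‖ * ‖ζ‖) :=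
            mul_le_mul_of_nonneg_left (norm_inner_le _ _) (norm_nonneg _)
        _ = ‖ξ‖ * ‖η‖ * ‖ζ‖ := (mul_assoc _ _ _).symm)

/-- The set of "compact" operators `K(X)`: the closed linear span of rank-one operators. -/
def compacts (A X : Type*) [CStarAlgebra A] [NormedAddCommGroup X]
    [NormedSpace ℂ X] [HilbertModule A X] : Set (X →L[ℂ] X) :=
  closure (Submodule.span ℂ {T : X →L[ℂ] X | ∃ ξ η : X, T = rankOne A ξ η} : Set (X →L[ℂ] X))

/-- `K(X·I)`, viewed inside the operators on `X`: the closed span of rank-one operators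
with both legs in the subset `S`. -/
def compactsOn (A : Type*) {X : Type*} [CStarAlgebra A] [NormedAddCommGroup X]
    [NormedSpace ℂ X] [HilbertModule A X] (S : Set X) : Set (X →L[ℂ] X) :=
  closure (Submodule.span ℂ
    {T : X →L[ℂ] X | ∃ ξ ∈ S, ∃ η ∈ S, T = rankOne A ξ η} : Set (X →L[ℂ] X))

/-- An operator is adjointable if it has an adjoint with respect to the `A`-valued
inner product. -/
def IsAdjointable (A : Type*) {X : Type*} [CStarAlgebra A] [NormedAddCommGroup X]
    [NormedSpace ℂ X] [HilbertModule A X] (S : X →L[ℂ] X) : Prop :=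
  ∃ T : X →L[ℂ] X, ∀ x y : X, inner (A := A) (S x) y = inner (A := A) x (T y)

end HilbertModule

/-- A C*-correspondence over `A`: a Hilbert `A`-module with a left action of `A`
by adjointable operators. -/
class Correspondence (A : Type*) [CStarAlgebra A] (X : Type*)
    [NormedAddCommGroup X] [NormedSpace ℂ X] extends HilbertModule A X where
  lsmul : A → X → X
  lsmul_add_left : ∀ (a b : A) (x : X), lsmul (a + b) x = lsmul a x + lsmul b x
  lsmul_add_right : ∀ (a : A) (x y : X), lsmul a (x + y) = lsmul a x + lsmul a y
  lsmul_mul : ∀ (a b : A) (x : X), lsmul (a * b) x = lsmul a (lsmul b x)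
  lsmul_csmul_left : ∀ (c : ℂ) (a : A) (x : X), lsmul (c • a) x = c • lsmul a x
  lsmul_csmul_right : ∀ (c : ℂ) (a : A) (x : X), lsmul a (c • x) = c • lsmul a x
  inner_lsmul_left : ∀ (a : A) (x y : X), inner (lsmul a x) y = inner x (lsmul (star a) y)
  lsmul_rsmul : ∀ (a : A) (x : X) (b : A), lsmul a (rsmul x b) = rsmul (lsmul a x) b
  norm_lsmul_le : ∀ (a : A) (x : X), ‖lsmul a x‖ ≤ ‖a‖ * ‖x‖

namespace Correspondence

open HilbertModule

variable {A : Type*} [CStarAlgebra A] {X : Type*}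
  [NormedAddCommGroup X] [NormedSpace ℂ X] [Correspondence A X]

/-- The left action `φ_X(a)` as a continuous linear operator on `X`. -/
def lact (A : Type*) {X : Type*} [CStarAlgebra A] [NormedAddCommGroup X]
    [NormedSpace ℂ X] [Correspondence A X] (a : A) : X →L[ℂ] X :=
  LinearMap.mkContinuous
    { toFun := lsmul a
      map_add' := lsmul_add_right a
      map_smul' := fun c x => by
        show lsmul a (c • x) = _
        simp only [RingHom.id_apply]; rw [lsmul_csmul_right] }
    ‖a‖ (norm_lsmul_le a)

/-- The ideal `X(S)`: closed span of `{⟨η, φ_X(a)ξ⟩ : a ∈ S}`. -/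
def corrApply (X : Type*) {A : Type*} [CStarAlgebra A] [NormedAddCommGroup X]
    [NormedSpace ℂ X] [Correspondence A X] (S : Set A) : Set A :=
  closure (Submodule.span ℂ
    {b : A | ∃ a ∈ S, ∃ ξ η : X, b = inner (A := A) η (lsmul a ξ)} : Set A)

/-- The ideal `X⁻¹(S) = {a : ⟨η, φ_X(a)ξ⟩ ∈ S for all ξ, η}`. -/
def corrInv (X : Type*) {A : Type*} [CStarAlgebra A] [NormedAddCommGroup X]
    [NormedSpace ℂ X] [Correspondence A X] (S : Set A) : Set A :=
  {a : A | ∀ ξ η : X, inner (A := A) η (lsmul a ξ) ∈ S}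

/-- The kernel of the left action `φ_X`. -/
def kerLact (X : Type*) {A : Type*} [CStarAlgebra A] [NormedAddCommGroup X]
    [NormedSpace ℂ X] [Correspondence A X] : Set A :=
  {a : A | ∀ ξ : X, lsmul a ξ = 0}

/-- Katsura's ideal `J_X = φ_X⁻¹(K(X)) ∩ (ker φ_X)^⊥`. -/
def JX (X : Type*) {A : Type*} [CStarAlgebra A] [NormedAddCommGroup X]
    [NormedSpace ℂ X] [Correspondence A X] : Set A :=
  {a : A | lact A (X := X) a ∈ compacts A X ∧ ∀ b ∈ kerLact X, a * b = 0}

end Correspondence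

open HilbertModule Correspondence

/-- Data presenting a Hilbert `B`-module `Y` as the quotient `X_I = X/XI` of a Hilbert
`A`-module `X` by a closed two-sided ideal `I` of `A` (with `B` playing the role of `A/I`). -/
structure QuotientData (A B : Type*) [CStarAlgebra A] [CStarAlgebra B]
    (I : TwoSidedIdeal A)
    (X Y : Type*) [NormedAddCommGroup X] [NormedSpace ℂ X] [HilbertModule A X]
    [NormedAddCommGroup Y] [NormedSpace ℂ Y] [HilbertModule B Y] : Type _ where
  π : A →⋆ₐ[ℂ] B
  π_surjective : Function.Surjective π
  π_ker : ∀ a : A, π a = 0 ↔ a ∈ I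
  q : X →ₗ[ℂ] Y
  q_surjective : Function.Surjective q
  q_ker : ∀ ξ : X, q ξ = 0 ↔ ξ ∈ idealSub X (I : Set A)
  q_inner : ∀ ξ ζ : X, inner (A := B) (q ξ) (q ζ) = π (inner (A := A) ξ ζ)
  q_rsmul : ∀ (ξ : X) (a : A), q (rsmul ξ a) = rsmul (q ξ) (π a)


/-- Quotient data compatible with the left actions (presenting `X_I` as a
C*-correspondence over `A/I`). -/
structure CorrQuotientData (A B : Type*) [CStarAlgebra A] [CStarAlgebra B]
    (I : TwoSidedIdeal A)
    (X Y : Type*) [NormedAddCommGroup X] [NormedSpace ℂ X] [Correspondence A X]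
    [NormedAddCommGroup Y] [NormedSpace ℂ Y] [Correspondence B Y]
    extends QuotientData A B I X Y where
  q_lsmul : ∀ (a : A) (ξ : X), q (lsmul a ξ) = lsmul (π a) (q ξ)

/-- Katsura's ideal `J(I) = {a : [φ_X(a)]_I ∈ K(X_I), a·X⁻¹(I) ⊂ I}`, expressed via
quotient data presenting `X_I`. -/
def JofI {A B : Type*} [CStarAlgebra A] [CStarAlgebra B] {I : TwoSidedIdeal A}
    {X Y : Type*} [NormedAddCommGroup X] [NormedSpace ℂ X] [Correspondence A X]
    [NormedAddCommGroup Y] [NormedSpace ℂ Y] [HilbertModule B Y]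
    (D : QuotientData A B I X Y) : Set A :=
  {a : A | (∃ T ∈ compacts B Y, ∀ ξ : X, T (D.q ξ) = D.q (lsmul a ξ)) ∧
    ∀ b ∈ corrInv X (I : Set A), a * b ∈ I}

/-- A Hilbert `A`-bimodule: a C*-correspondence together with a left inner product
satisfying `φ_X(⟪ξ,η⟫) = θ_{ξ,η}`. -/
class HilbertBimodule (A : Type*) [CStarAlgebra A] (X : Type*)
    [NormedAddCommGroup X] [NormedSpace ℂ X] extends Correspondence A X where
  linner : X → X → A
  lsmul_linner : ∀ ξ η ζ : X, lsmul (linner ξ η) ζ = rsmul ξ (inner η ζ)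

/-- The closed subspace `φ_X(S)X`: closed span of `{φ_X(a)ξ : a ∈ S}`. -/
def lsmulSet (X : Type*) {A : Type*} [CStarAlgebra A] [NormedAddCommGroup X]
    [NormedSpace ℂ X] [Correspondence A X] (S : Set A) : Set X :=
  closure (Submodule.span ℂ
    {x : X | ∃ a ∈ S, ∃ ξ : X, x = Correspondence.lsmul a ξ} : Set X)

section Stmt13Aux

open HilbertModule Correspondence

section HM

variable {A : Type*} [CStarAlgebra A] {X : Type*}
  [NormedAddCommGroup X] [NormedSpace ℂ X] [HilbertModule A X]

lemma rankOne_apply (ξ η ζ : X) :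
    rankOne A ξ η ζ = rsmul ξ (HilbertModule.inner (A := A) η ζ) := rfl

lemma inner_zero_right' (x : X) : HilbertModule.inner (A := A) x (0 : X) = 0 := by
  have h := HilbertModule.inner_add_right (A := A) x 0 0
  rw [add_zero] at h
  exact (left_eq_add.mp h)

lemma inner_zero_left' (x : X) : HilbertModule.inner (A := A) (0 : X) x = 0 := by
  rw [← HilbertModule.star_inner, inner_zero_right', star_zero]

lemma inner_sub_left' (x y z : X) :
    HilbertModule.inner (A := A) (x - y) z = HilbertModule.inner x z - HilbertModule.inner y z := by
  have h := HilbertModule.inner_add_left (A := A) (x - y) y z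
  rw [sub_add_cancel] at h
  rw [h]; abel

lemma inner_sub_right' (x y z : X) :
    HilbertModule.inner (A := A) x (y - z) = HilbertModule.inner x y - HilbertModule.inner x z := by
  rw [← HilbertModule.star_inner, inner_sub_left', star_sub, HilbertModule.star_inner, HilbertModule.star_inner]

lemma inner_csmul_left' (c : ℂ) (x y : X) :
    HilbertModule.inner (A := A) (c • x) y = star c • HilbertModule.inner x y := by
  rw [← HilbertModule.star_inner, HilbertModule.inner_csmul_right, star_smul, HilbertModule.star_inner]

lemma inner_rsmul_left' (x y : X) (a : A) :
    HilbertModule.inner (A := A) (rsmul x a) y = star a * HilbertModule.inner x y := by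
  rw [← HilbertModule.star_inner, HilbertModule.inner_rsmul_right, star_mul, HilbertModule.star_inner]

/-- `S` and `T` are mutually adjoint operators. -/
def IsAdjointPair (A : Type*) {X : Type*} [CStarAlgebra A] [NormedAddCommGroup X]
    [NormedSpace ℂ X] [HilbertModule A X] (S T : X →L[ℂ] X) : Prop :=
  ∀ x y : X, HilbertModule.inner (A := A) (S x) y = HilbertModule.inner (A := A) x (T y)

namespace IsAdjointPair

variable {S T S₁ T₁ S₂ T₂ R : X →L[ℂ] X}

lemma symm (h : IsAdjointPair A S T) : IsAdjointPair A T S := fun x y => by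
  have h2 := congrArg star (h y x)
  rw [HilbertModule.star_inner, HilbertModule.star_inner] at h2
  exact h2.symm

lemma rankOne' (ξ η : X) : IsAdjointPair A (rankOne A ξ η) (rankOne A η ξ) := by
  intro x y
  rw [rankOne_apply, rankOne_apply, inner_rsmul_left', HilbertModule.inner_rsmul_right, HilbertModule.star_inner]

lemma zero : IsAdjointPair A (0 : X →L[ℂ] X) 0 := fun x y => by
  simp only [ContinuousLinearMap.zero_apply, inner_zero_left', inner_zero_right']

lemma one : IsAdjointPair A (1 : X →L[ℂ] X) 1 := fun x y => rfl

lemma add (h₁ : IsAdjointPair A S₁ T₁) (h₂ : IsAdjointPair A S₂ T₂) :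
    IsAdjointPair A (S₁ + S₂) (T₁ + T₂) := fun x y => by
  simp only [ContinuousLinearMap.add_apply]
  rw [HilbertModule.inner_add_left, HilbertModule.inner_add_right, h₁, h₂]

lemma sub (h₁ : IsAdjointPair A S₁ T₁) (h₂ : IsAdjointPair A S₂ T₂) :
    IsAdjointPair A (S₁ - S₂) (T₁ - T₂) := fun x y => by
  simp only [ContinuousLinearMap.sub_apply]
  rw [inner_sub_left', inner_sub_right', h₁, h₂]

lemma smul (c : ℂ) (h : IsAdjointPair A S T) :
    IsAdjointPair A (c • S) (star c • T) := fun x y => by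
  simp only [ContinuousLinearMap.smul_apply]
  rw [inner_csmul_left', HilbertModule.inner_csmul_right, h]

lemma mul (h₁ : IsAdjointPair A S₁ T₁) (h₂ : IsAdjointPair A S₂ T₂) :
    IsAdjointPair A (S₁ * S₂) (T₂ * T₁) := fun x y => by
  simp only [ContinuousLinearMap.mul_apply]
  rw [h₁, h₂]

lemma pow (h : IsAdjointPair A R R) (n : ℕ) : IsAdjointPair A (R ^ n) (R ^ n) := by
  induction n with
  | zero => simpa using one (A := A) (X := X)
  | succ n ih =>
    have := ih.mul h
    rwa [← pow_succ, ← pow_succ'] at this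

lemma norm_apply_le (h : IsAdjointPair A S T) (y : X) : ‖T y‖ ≤ ‖S‖ * ‖y‖ := by
  have key : ‖T y‖ ^ 2 ≤ ‖S‖ * ‖y‖ * ‖T y‖ := by
    calc ‖T y‖ ^ 2 = ‖HilbertModule.inner (A := A) (T y) (T y)‖ := HilbertModule.norm_sq_inner _
      _ = ‖HilbertModule.inner (A := A) y (S (T y))‖ := by rw [h.symm y (T y)]
      _ ≤ ‖y‖ * ‖S (T y)‖ := HilbertModule.norm_inner_le _ _
      _ ≤ ‖y‖ * (‖S‖ * ‖T y‖) := by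
          gcongr
          exact S.le_opNorm _
      _ = ‖S‖ * ‖y‖ * ‖T y‖ := by ring
  rcases eq_or_lt_of_le (norm_nonneg (T y)) with h0 | h0
  · rw [← h0]; positivity
  · rw [sq] at key
    exact le_of_mul_le_mul_right key h0

lemma norm_le (h : IsAdjointPair A S T) : ‖T‖ ≤ ‖S‖ :=
  T.opNorm_le_bound (norm_nonneg S) h.norm_apply_le

lemma step (h : IsAdjointPair A S T) (y : X) :
    ‖S y‖ ^ 2 ≤ ‖y‖ * ‖(T * S) y‖ := by
  calc ‖S y‖ ^ 2 = ‖HilbertModule.inner (A := A) (S y) (S y)‖ := HilbertModule.norm_sq_inner _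
    _ = ‖HilbertModule.inner (A := A) y (T (S y))‖ := by rw [h y (S y)]
    _ ≤ ‖y‖ * ‖T (S y)‖ := HilbertModule.norm_inner_le _ _
    _ = ‖y‖ * ‖(T * S) y‖ := rfl

lemma iterate (h : IsAdjointPair A R R) (y : X) (k : ℕ) :
    ‖R y‖ ^ (2 ^ k) ≤ ‖y‖ ^ (2 ^ k - 1) * ‖(R ^ (2 ^ k)) y‖ := by
  induction k with
  | zero => simpa using le_rfl
  | succ k ih =>
    have hpair : IsAdjointPair A (R ^ (2 ^ k)) (R ^ (2 ^ k)) := h.pow _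
    have hstep := hpair.step y
    have hpow : (R ^ (2 ^ k)) * (R ^ (2 ^ k)) = R ^ (2 ^ (k + 1)) := by
      rw [← pow_add]
      congr 1
      omega
    rw [hpow] at hstep
    have h1 : (1 : ℕ) ≤ 2 ^ k := Nat.one_le_two_pow
    have h2 : (2 : ℕ) ^ (k + 1) = 2 ^ k * 2 := by rw [pow_succ]
    calc ‖R y‖ ^ 2 ^ (k + 1) = (‖R y‖ ^ (2 ^ k)) ^ 2 := by rw [← pow_mul, h2]
      _ ≤ (‖y‖ ^ (2 ^ k - 1) * ‖(R ^ (2 ^ k)) y‖) ^ 2 := by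
          gcongr
      _ = ‖y‖ ^ (2 ^ k - 1) * ‖y‖ ^ (2 ^ k - 1) * ‖(R ^ (2 ^ k)) y‖ ^ 2 := by ring
      _ ≤ ‖y‖ ^ (2 ^ k - 1) * ‖y‖ ^ (2 ^ k - 1) * (‖y‖ * ‖(R ^ (2 ^ (k + 1))) y‖) := by
          gcongr
      _ = ‖y‖ ^ ((2 ^ k - 1) + (2 ^ k - 1) + 1) * ‖(R ^ (2 ^ (k + 1))) y‖ := by
          rw [pow_add, pow_add, pow_one]; ring
      _ = ‖y‖ ^ (2 ^ (k + 1) - 1) * ‖(R ^ (2 ^ (k + 1))) y‖ := by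
          congr 2
          omega

end IsAdjointPair

end HM

section Corr

variable {A : Type*} [CStarAlgebra A] {X : Type*}
  [NormedAddCommGroup X] [NormedSpace ℂ X] [Correspondence A X]

lemma lact_apply (a : A) (ξ : X) : lact A (X := X) a ξ = lsmul a ξ := rfl

lemma lsmul_zero' (a : A) : lsmul a (0 : X) = 0 := by
  have h := Correspondence.lsmul_add_right a (0 : X) 0
  rw [add_zero] at h
  exact (left_eq_add.mp h)

lemma inner_lsmul_right' (a : A) (ξ η : X) :
    HilbertModule.inner (A := A) η (lsmul a ξ) = HilbertModule.inner (lsmul (star a) η) ξ := by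
  rw [← HilbertModule.star_inner, Correspondence.inner_lsmul_left, HilbertModule.star_inner]

lemma lact_mul (a b : A) : lact A (X := X) (a * b) = lact A a ∘L lact A b := by
  ext ζ
  exact Correspondence.lsmul_mul a b ζ

variable (X) in
lemma corrInv_mul_left {I : Set A} {b : A} (hb : b ∈ corrInv X I) (x : A) :
    x * b ∈ corrInv X I := by
  intro ξ η
  rw [Correspondence.lsmul_mul, inner_lsmul_right' x (lsmul b ξ) η]
  exact hb ξ _

variable (X) in
lemma corrInv_mul_right {I : Set A} {b : A} (hb : b ∈ corrInv X I) (x : A) :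
    b * x ∈ corrInv X I := by
  intro ξ η
  rw [Correspondence.lsmul_mul]
  exact hb _ _

variable (X) in
lemma JX_mul_right {a : A} (ha : a ∈ JX X) (b : A) : a * b ∈ JX X := by
  constructor
  · -- lact (a * b) ∈ compacts
    rw [lact_mul]
    set Φ : (X →L[ℂ] X) →L[ℂ] (X →L[ℂ] X) :=
      (ContinuousLinearMap.compL ℂ X X X).flip (lact A b) with hΦdef
    have hΦ : ∀ U : X →L[ℂ] X, Φ U = U ∘L lact A b := fun U => rfl
    have hmaps : Set.MapsTo Φ
        ((Submodule.span ℂ {T : X →L[ℂ] X | ∃ ξ η : X, T = rankOne A ξ η} : Submodule ℂ _) : Set _)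
        ((Submodule.span ℂ {T : X →L[ℂ] X | ∃ ξ η : X, T = rankOne A ξ η} : Submodule ℂ _) : Set _) := by
      intro U hU
      induction hU using Submodule.span_induction with
      | mem x hx =>
        obtain ⟨ξ, η, rfl⟩ := hx
        refine Submodule.subset_span ⟨ξ, lsmul (star b) η, ?_⟩
        ext ζ
        rw [hΦ, ContinuousLinearMap.comp_apply, rankOne_apply, rankOne_apply,
          lact_apply, inner_lsmul_right']
      | zero => simpa [map_zero] using Submodule.zero_mem _
      | add x y hx hy ihx ihy => simpa [map_add] using Submodule.add_mem _ ihx ihy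
      | smul c x hx ih => simpa [map_smul] using Submodule.smul_mem _ c ih
    have := map_mem_closure Φ.continuous ha.1 hmaps
    rwa [hΦ] at this
  · intro c hc
    rw [mul_assoc]
    refine ha.2 (b * c) ?_
    intro ξ
    rw [Correspondence.lsmul_mul, hc ξ, lsmul_zero']

end Corr

section Quot

variable {A B : Type*} [CStarAlgebra A] [CStarAlgebra B] {I : TwoSidedIdeal A}
  {X Y : Type*} [NormedAddCommGroup X] [NormedSpace ℂ X] [HilbertModule A X]
  [NormedAddCommGroup Y] [NormedSpace ℂ Y] [HilbertModule B Y]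

lemma norm_q_le (D : QuotientData A B I X Y) (ξ : X) : ‖D.q ξ‖ ≤ ‖ξ‖ := by
  have h1 : ‖D.q ξ‖ ^ 2 = ‖HilbertModule.inner (A := B) (D.q ξ) (D.q ξ)‖ := HilbertModule.norm_sq_inner _
  rw [D.q_inner] at h1
  have h2 : ‖D.π (HilbertModule.inner (A := A) ξ ξ)‖ ≤ ‖HilbertModule.inner (A := A) ξ ξ‖ :=
    NonUnitalStarAlgHom.norm_apply_le D.π _
  have h3 : ‖ξ‖ ^ 2 = ‖HilbertModule.inner (A := A) ξ ξ‖ := HilbertModule.norm_sq_inner _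
  nlinarith [norm_nonneg (D.q ξ), norm_nonneg ξ]

/-- `S` on the quotient is induced by `T`. -/
def Compat (D : QuotientData A B I X Y) (T : X →L[ℂ] X) (S : Y →L[ℂ] Y) : Prop :=
  ∀ ξ : X, S (D.q ξ) = D.q (T ξ)

namespace Compat

variable {D : QuotientData A B I X Y} {T T' T₁ T₂ S S' S₁ S₂ : _}

lemma zero : Compat D (0 : X →L[ℂ] X) (0 : Y →L[ℂ] Y) := fun ξ => by
  simp only [ContinuousLinearMap.zero_apply, map_zero]

lemma add (h₁ : Compat D T₁ S₁) (h₂ : Compat D T₂ S₂) :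
    Compat D (T₁ + T₂) (S₁ + S₂) := fun ξ => by
  simp only [ContinuousLinearMap.add_apply, h₁ ξ, h₂ ξ, ← map_add]

lemma sub (h₁ : Compat D T₁ S₁) (h₂ : Compat D T₂ S₂) :
    Compat D (T₁ - T₂) (S₁ - S₂) := fun ξ => by
  simp only [ContinuousLinearMap.sub_apply, h₁ ξ, h₂ ξ, ← map_sub]

lemma smul (c : ℂ) (h : Compat D T S) : Compat D (c • T) (c • S) := fun ξ => by
  simp only [ContinuousLinearMap.smul_apply, h ξ, ← map_smul]

lemma mul (h₁ : Compat D T₁ S₁) (h₂ : Compat D T₂ S₂) :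
    Compat D (T₁ * T₂) (S₁ * S₂) := fun ξ => by
  simp only [ContinuousLinearMap.mul_apply, h₂ ξ, h₁ (T₂ ξ)]

lemma one : Compat D (1 : X →L[ℂ] X) (1 : Y →L[ℂ] Y) := fun ξ => rfl

lemma pow (h : Compat D T S) (n : ℕ) : Compat D (T ^ n) (S ^ n) := by
  induction n with
  | zero => simpa using one
  | succ n ih =>
    have := ih.mul h
    rwa [← pow_succ, ← pow_succ] at this

lemma adjointPair (hT : IsAdjointPair A T T') (hS : Compat D T S) (hS' : Compat D T' S') :
    IsAdjointPair B S S' := by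
  intro y z
  obtain ⟨ξ, rfl⟩ := D.q_surjective y
  obtain ⟨ζ, rfl⟩ := D.q_surjective z
  rw [hS, hS', D.q_inner, D.q_inner, hT]

lemma norm_le (hT : IsAdjointPair A T T') (hS : Compat D T S) (hS' : Compat D T' S') :
    ‖S‖ ≤ ‖T‖ := by
  refine S.opNorm_le_bound (norm_nonneg T) fun y => ?_
  obtain ⟨ξ, hξ⟩ := D.q_surjective y
  have hadj : IsAdjointPair B S S' := adjointPair hT hS hS'
  have hR : IsAdjointPair B (S' * S) (S' * S) := hadj.symm.mul hadj
  have main : ∀ k : ℕ,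
      ‖S y‖ ^ (2 ^ (k + 1)) ≤ ‖y‖ ^ (2 ^ (k + 1) - 1) * (‖T‖ ^ (2 ^ (k + 1)) * ‖ξ‖) := by
    intro k
    have h1 : ‖S y‖ ^ 2 ≤ ‖y‖ * ‖(S' * S) y‖ := hadj.step y
    have h2 : ‖(S' * S) y‖ ^ (2 ^ k) ≤ ‖y‖ ^ (2 ^ k - 1) * ‖((S' * S) ^ (2 ^ k)) y‖ :=
      hR.iterate y k
    have hcompat : Compat D ((T' * T) ^ (2 ^ k)) ((S' * S) ^ (2 ^ k)) := (hS'.mul hS).pow _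
    have h4 : ‖((S' * S) ^ (2 ^ k)) y‖ ≤ ‖T‖ ^ (2 ^ (k + 1)) * ‖ξ‖ := by
      rw [← hξ, hcompat ξ]
      refine (norm_q_le D _).trans ?_
      calc ‖((T' * T) ^ (2 ^ k)) ξ‖ ≤ ‖(T' * T) ^ (2 ^ k)‖ * ‖ξ‖ :=
            ContinuousLinearMap.le_opNorm _ _
        _ ≤ ‖T' * T‖ ^ (2 ^ k) * ‖ξ‖ := by
            gcongr
            exact norm_pow_le' _ (Nat.pos_of_ne_zero (by positivity))
        _ ≤ (‖T‖ * ‖T‖) ^ (2 ^ k) * ‖ξ‖ := by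
            gcongr
            exact (norm_mul_le _ _).trans (by gcongr; exact hT.norm_le)
        _ = ‖T‖ ^ (2 ^ (k + 1)) * ‖ξ‖ := by
            rw [← sq, ← pow_mul]
            congr 2
            omega
    have h1k : (1 : ℕ) ≤ 2 ^ k := Nat.one_le_two_pow
    calc ‖S y‖ ^ (2 ^ (k + 1)) = (‖S y‖ ^ 2) ^ (2 ^ k) := by
          rw [← pow_mul]
          congr 1
          omega
      _ ≤ (‖y‖ * ‖(S' * S) y‖) ^ (2 ^ k) := by gcongr
      _ = ‖y‖ ^ (2 ^ k) * ‖(S' * S) y‖ ^ (2 ^ k) := mul_pow _ _ _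
      _ ≤ ‖y‖ ^ (2 ^ k) * (‖y‖ ^ (2 ^ k - 1) * (‖T‖ ^ (2 ^ (k + 1)) * ‖ξ‖)) := by
          refine mul_le_mul_of_nonneg_left (h2.trans ?_) (by positivity)
          gcongr
      _ = ‖y‖ ^ (2 ^ k + (2 ^ k - 1)) * (‖T‖ ^ (2 ^ (k + 1)) * ‖ξ‖) := by
          rw [pow_add]; ring
      _ = ‖y‖ ^ (2 ^ (k + 1) - 1) * (‖T‖ ^ (2 ^ (k + 1)) * ‖ξ‖) := by
          congr 2
          omega
  rcases eq_or_lt_of_le (norm_nonneg y) with hy0 | hy0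
  · have : y = 0 := by rwa [eq_comm, norm_eq_zero] at hy0
    simp [this]
  by_contra hcon
  push_neg at hcon
  rcases eq_or_lt_of_le (norm_nonneg T) with hT0 | hT0
  · have h := main 0
    rw [← hT0] at h
    have h20 : (0 : ℝ) ^ (2 ^ (0 + 1)) = 0 := by norm_num
    rw [h20, zero_mul, mul_zero] at h
    have hpos : 0 < ‖S y‖ := by nlinarith [norm_nonneg y]
    have hpos2 : 0 < ‖S y‖ ^ (2 ^ (0 + 1)) := pow_pos hpos _
    linarith
  · set r := ‖S y‖ / (‖T‖ * ‖y‖) with hrdef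
    have hr1 : 1 < r := (one_lt_div (by positivity)).mpr hcon
    obtain ⟨n, hn⟩ := pow_unbounded_of_one_lt (‖ξ‖ / ‖y‖) hr1
    have hle : r ^ n ≤ r ^ (2 ^ (n + 1)) := by
      refine pow_le_pow_right₀ hr1.le ?_
      calc n ≤ 2 ^ n := Nat.le_of_lt (Nat.lt_two_pow_self (n := n))
        _ ≤ 2 ^ (n + 1) := Nat.pow_le_pow_right (by norm_num) (by omega)
    have hfin : r ^ (2 ^ (n + 1)) ≤ ‖ξ‖ / ‖y‖ := by
      rw [hrdef, div_pow, div_le_div_iff₀ (by positivity) hy0]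
      have hm : 2 ^ (n + 1) - 1 + 1 = 2 ^ (n + 1) := by
        have : (1 : ℕ) ≤ 2 ^ (n + 1) := Nat.one_le_two_pow
        omega
      calc ‖S y‖ ^ (2 ^ (n + 1)) * ‖y‖
          ≤ (‖y‖ ^ (2 ^ (n + 1) - 1) * (‖T‖ ^ (2 ^ (n + 1)) * ‖ξ‖)) * ‖y‖ := by
            gcongr
            exact main n
        _ = ‖ξ‖ * (‖T‖ ^ (2 ^ (n + 1)) * (‖y‖ ^ (2 ^ (n + 1) - 1) * ‖y‖ ^ 1)) := by ring
        _ = ‖ξ‖ * (‖T‖ * ‖y‖) ^ (2 ^ (n + 1)) := by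
            rw [← pow_add, hm, mul_pow]
    linarith [hle.trans hfin]

end Compat

lemma descend (D : QuotientData A B I X Y) [CompleteSpace Y] {T : X →L[ℂ] X}
    (hT : T ∈ compacts A X) :
    ∃ S ∈ compacts B Y, Compat D T S := by
  have hspan : ∀ U ∈ (Submodule.span ℂ
      {T : X →L[ℂ] X | ∃ ξ η : X, T = rankOne A ξ η} : Submodule ℂ _),
      ∃ U' S S', S ∈ (Submodule.span ℂ
        {W : Y →L[ℂ] Y | ∃ ξ η : Y, W = rankOne B ξ η} : Submodule ℂ _) ∧
        S' ∈ (Submodule.span ℂ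
        {W : Y →L[ℂ] Y | ∃ ξ η : Y, W = rankOne B ξ η} : Submodule ℂ _) ∧
        IsAdjointPair A U U' ∧ Compat D U S ∧ Compat D U' S' := by
    intro U hU
    induction hU using Submodule.span_induction with
    | mem x hx =>
      obtain ⟨ξ, η, rfl⟩ := hx
      have hcompat : ∀ ξ η : X, Compat D (rankOne A ξ η) (rankOne B (D.q ξ) (D.q η)) := by
        intro ξ η ζ
        rw [rankOne_apply, rankOne_apply, D.q_inner, D.q_rsmul]
      exact ⟨rankOne A η ξ, rankOne B (D.q ξ) (D.q η), rankOne B (D.q η) (D.q ξ),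
        Submodule.subset_span ⟨_, _, rfl⟩, Submodule.subset_span ⟨_, _, rfl⟩,
        IsAdjointPair.rankOne' ξ η, hcompat ξ η, hcompat η ξ⟩
    | zero =>
      exact ⟨0, 0, 0, Submodule.zero_mem _, Submodule.zero_mem _,
        IsAdjointPair.zero, Compat.zero, Compat.zero⟩
    | add x y hx hy ihx ihy =>
      obtain ⟨x', Sx, Sx', hSx, hSx', hax, hcx, hcx'⟩ := ihx
      obtain ⟨y', Sy, Sy', hSy, hSy', hay, hcy, hcy'⟩ := ihy
      exact ⟨x' + y', Sx + Sy, Sx' + Sy', Submodule.add_mem _ hSx hSy,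
        Submodule.add_mem _ hSx' hSy', hax.add hay, hcx.add hcy, hcx'.add hcy'⟩
    | smul c x hx ih =>
      obtain ⟨x', Sx, Sx', hSx, hSx', hax, hcx, hcx'⟩ := ih
      exact ⟨star c • x', c • Sx, star c • Sx', Submodule.smul_mem _ _ hSx,
        Submodule.smul_mem _ _ hSx', hax.smul c, hcx.smul c, hcx'.smul (star c)⟩
  obtain ⟨u, hu, hconv⟩ := mem_closure_iff_seq_limit.mp hT
  choose T' S S' hSmem hS'mem hadj hcompat hcompat' using fun n => hspan (u n) (hu n)
  have hScauchy : CauchySeq S := by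
    rw [Metric.cauchySeq_iff] at *
    have hTc := hconv.cauchySeq
    rw [Metric.cauchySeq_iff] at hTc
    intro ε hε
    obtain ⟨N, hN⟩ := hTc ε hε
    refine ⟨N, fun m hm n hn => ?_⟩
    have hdiff : ‖S m - S n‖ ≤ ‖u m - u n‖ :=
      Compat.norm_le ((hadj m).sub (hadj n)) ((hcompat m).sub (hcompat n))
        ((hcompat' m).sub (hcompat' n))
    calc dist (S m) (S n) = ‖S m - S n‖ := dist_eq_norm _ _
      _ ≤ ‖u m - u n‖ := hdiff
      _ = dist (u m) (u n) := (dist_eq_norm _ _).symm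
      _ < ε := hN m hm n hn
  obtain ⟨Slim, hSlim⟩ := cauchySeq_tendsto_of_complete hScauchy
  refine ⟨Slim, ?_, ?_⟩
  · exact mem_closure_of_tendsto hSlim (Filter.Eventually.of_forall hSmem)
  · intro ξ
    have h1 : Filter.Tendsto (fun n => (S n) (D.q ξ)) Filter.atTop (nhds (Slim (D.q ξ))) :=
      ((ContinuousLinearMap.apply ℂ Y (D.q ξ)).continuous.tendsto Slim).comp hSlim
    have h2 : Filter.Tendsto (fun n => (S n) (D.q ξ)) Filter.atTop (nhds (D.q (T ξ))) := by
      have hb : ∀ n, ‖(S n) (D.q ξ) - D.q (T ξ)‖ ≤ ‖u n - T‖ * ‖ξ‖ := by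
        intro n
        rw [hcompat n ξ, ← map_sub]
        calc ‖D.q (u n ξ - T ξ)‖ ≤ ‖u n ξ - T ξ‖ := norm_q_le D _
          _ = ‖(u n - T) ξ‖ := by rw [ContinuousLinearMap.sub_apply]
          _ ≤ ‖u n - T‖ * ‖ξ‖ := ContinuousLinearMap.le_opNorm _ _
      rw [← tendsto_sub_nhds_zero_iff]
      have hz : Filter.Tendsto (fun n => ‖u n - T‖ * ‖ξ‖) Filter.atTop (nhds 0) := by
        have := (tendsto_iff_norm_sub_tendsto_zero.mp hconv).mul_const ‖ξ‖
        simpa using this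
      have := squeeze_zero_norm hb hz
      exact this
    exact tendsto_nhds_unique h1 h2

end Quot

section CStarApprox

variable {A : Type*} [CStarAlgebra A]

lemma cstar_approx (a : A) {δ : ℝ} (hδ : 0 < δ) :
    ∃ w : A, ‖a - a * ((star a * a) * w)‖ ^ 2 ≤ δ := by
  set c := star a * a with hc
  have hsa : IsSelfAdjoint c := IsSelfAdjoint.star_mul_self a
  have hspec : ∀ t ∈ spectrum ℝ c, 0 ≤ t := spectrum_star_mul_self_nonneg
  have hgcont : ContinuousOn (fun t : ℝ => (t + δ)⁻¹) (spectrum ℝ c) := by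
    refine ContinuousOn.inv₀ (by fun_prop) fun t ht => ?_
    have := hspec t ht
    positivity
  set g := fun t : ℝ => (t + δ)⁻¹ with hg
  set f := fun t : ℝ => 1 - t * (t + δ)⁻¹ with hf
  have hfcont : ContinuousOn f (spectrum ℝ c) :=
    continuousOn_const.sub (continuousOn_id.mul hgcont)
  have htgcont : ContinuousOn (fun t : ℝ => t * g t) (spectrum ℝ c) :=
    continuousOn_id.mul hgcont
  refine ⟨cfc g c, ?_⟩
  have h1 : cfc (fun t : ℝ => t * g t) c = c * cfc g c := by
    rw [cfc_mul _ _ c (by fun_prop) hgcont, cfc_id' ℝ c hsa]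
  have h2 : a - a * (c * cfc g c) = a * cfc f c := by
    rw [← h1]
    have : cfc f c = 1 - cfc (fun t : ℝ => t * g t) c := by
      rw [hf]
      rw [cfc_sub (fun _ : ℝ => (1 : ℝ)) (fun t : ℝ => t * g t) c (by fun_prop) htgcont]
      rw [cfc_const_one ℝ c hsa]
    rw [this, mul_sub, mul_one]
  rw [h2]
  have hv : IsSelfAdjoint (cfc f c) := cfc_predicate f c
  have h3 : ‖a * cfc f c‖ ^ 2 = ‖star (a * cfc f c) * (a * cfc f c)‖ := by
    rw [CStarRing.norm_star_mul_self, sq]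
  have h4 : star (a * cfc f c) * (a * cfc f c) = cfc (fun t => f t * (t * f t)) c := by
    rw [star_mul, hv.star_eq]
    have e1 : cfc f c * star a * (a * cfc f c) = cfc f c * (c * cfc f c) := by
      rw [hc, mul_assoc (cfc f (star a * a)) (star a) _, ← mul_assoc (star a) a _]
    rw [e1]
    have e2 : cfc (fun t : ℝ => t * f t) c = c * cfc f c := by
      rw [cfc_mul _ _ c (by fun_prop) hfcont, cfc_id' ℝ c hsa]
    rw [← e2, ← cfc_mul f (fun t : ℝ => t * f t) c hfcont (continuousOn_id.mul hfcont)]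
  rw [h3, h4]
  refine norm_cfc_le hδ.le fun t ht => ?_
  have ht0 := hspec t ht
  have hpos : 0 < t + δ := by linarith
  have hne : t + δ ≠ 0 := ne_of_gt hpos
  have h6 : f t = δ / (t + δ) := by
    simp only [hf]
    field_simp
    ring
  have hd : 0 ≤ δ / (t + δ) := by positivity
  rw [h6, Real.norm_eq_abs, abs_of_nonneg (mul_nonneg hd (mul_nonneg ht0 hd))]
  rw [show δ / (t + δ) * (t * (δ / (t + δ))) = δ * t * δ / ((t + δ) * (t + δ)) by
    field_simp]
  rw [div_le_iff₀ (by positivity)]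
  nlinarith [mul_nonneg (mul_nonneg hδ.le ht0) ht0,
    mul_nonneg (mul_nonneg hδ.le hδ.le) ht0, mul_pos (mul_pos hδ hδ) hδ]

end CStarApprox

end Stmt13Aux

open HilbertModule Correspondence in
/-- an ideal `I` is negatively invariant (`J_X ∩ X⁻¹(I) ⊂ I`) if and
only if `J_X ⊂ J(I)`. -/
theorem stmt13 {A B : Type*} [CStarAlgebra A] [CStarAlgebra B]
    {X Y : Type*} [NormedAddCommGroup X] [NormedSpace ℂ X] [Correspondence A X]
    [NormedAddCommGroup Y] [NormedSpace ℂ Y] [HilbertModule B Y]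
    [CompleteSpace X] [CompleteSpace Y]
    (I : TwoSidedIdeal A) (hI : IsClosed (I : Set A))
    (D : QuotientData A B I X Y) :
    JX X ∩ corrInv X (I : Set A) ⊆ (I : Set A) ↔ JX X ⊆ JofI D := by
  constructor
  · intro h a ha
    constructor
    · obtain ⟨S, hS, hco⟩ := descend D ha.1
      exact ⟨S, hS, fun ξ => hco ξ⟩
    · intro b hb
      exact h ⟨JX_mul_right X ha b, corrInv_mul_left X hb a⟩
  · intro h a ha
    obtain ⟨haJ, haInv⟩ := ha
    have hmem : ∀ b ∈ corrInv X (I : Set A), a * b ∈ I := (h haJ).2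
    have hcI : star a * a ∈ corrInv X (I : Set A) := corrInv_mul_left X haInv (star a)
    have hclo : a ∈ closure (I : Set A) := by
      rw [Metric.mem_closure_iff]
      intro ε hε
      obtain ⟨w, hw⟩ := cstar_approx a (show (0 : ℝ) < ε ^ 2 / 2 by positivity)
      refine ⟨a * ((star a * a) * w), ?_, ?_⟩
      · exact hmem _ (corrInv_mul_right X hcI w)
      · rw [dist_eq_norm]
        nlinarith [norm_nonneg (a - a * ((star a * a) * w)), hε]
    rwa [hI.closure_eq] at hclo
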